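/- Let N and M be von Neumann algebras acting on a Hilbert space H. If N ⊆ M and d(N, M) < 1, then N = M. -/
import Mathlib


set_option synthInstance.maxHeartbeats 400000
set_option maxHeartbeats 1000000

/-- The closed unit ball of a von Neumann algebra. -/
def vnBall {H : Type*} [NormedAddCommGroup H] [InnerProductSpace ℂ H] [CompleteSpace H]
    (N : VonNeumannAlgebra H) : Set (H →L[ℂ] H) := {x | x ∈ N ∧ ‖x‖ ≤ 1}

/-- The Kadison–Kastler distance between two von Neumann algebras acting on the same
Hilbert space: the maximum of the two one-sided Hausdorff-type distances between their
closed unit balls. -/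
noncomputable def kkDist {H : Type*} [NormedAddCommGroup H] [InnerProductSpace ℂ H]
    [CompleteSpace H] (N M : VonNeumannAlgebra H) : ℝ :=
  max (⨆ n : vnBall N, ⨅ m : vnBall M, ‖(n : H →L[ℂ] H) - m‖)
      (⨆ m : vnBall M, ⨅ n : vnBall N, ‖(m : H →L[ℂ] H) - n‖)

lemma centralizer_isClosed {H : Type*} [NormedAddCommGroup H] [InnerProductSpace ℂ H]
    [CompleteSpace H] (S : Set (H →L[ℂ] H)) : IsClosed (Set.centralizer S) := by
  have : Set.centralizer S = ⋂ m ∈ S, {c : H →L[ℂ] H | m * c = c * m} := by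
    ext c; simp [Set.centralizer, Set.mem_iInter]
  rw [this]
  refine isClosed_biInter fun m _ => ?_
  have hc : Continuous fun c : H →L[ℂ] H => m * c - c * m :=
    (continuous_const.mul continuous_id).sub (continuous_id.mul continuous_const)
  have : {c : H →L[ℂ] H | m * c = c * m} = (fun c : H →L[ℂ] H => m * c - c * m) ⁻¹' {0} := by
    ext c; simp [sub_eq_zero]
  rw [this]
  exact isClosed_singleton.preimage hc

lemma vn_isClosed {H : Type*} [NormedAddCommGroup H] [InnerProductSpace ℂ H]
    [CompleteSpace H] (N : VonNeumannAlgebra H) : IsClosed (N : Set (H →L[ℂ] H)) := by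
  rw [← N.centralizer_centralizer]
  exact centralizer_isClosed _

/-- If `N ⊆ M` are von Neumann algebras on a Hilbert space `H` with `d(N, M) < 1`,
then `N = M`. -/
theorem subalgebra_eq_of_kkDist_lt_one {H : Type*} [NormedAddCommGroup H]
    [InnerProductSpace ℂ H] [CompleteSpace H] (N M : VonNeumannAlgebra H)
    (hNM : (N : Set (H →L[ℂ] H)) ⊆ (M : Set (H →L[ℂ] H))) (hd : kkDist N M < 1) :
    N = M := by
  set d : ℝ := kkDist N M with hD
  set r : ℝ := (1 + max d 0) / 2 with hr
  have hr0 : 0 ≤ r := by positivity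
  have hr1 : r < 1 := by
    rw [hr]
    have : max d 0 < 1 := max_lt hd one_pos
    linarith
  have hdr : d < r := by
    have h1 : max d 0 < 1 := max_lt hd one_pos
    have h2 : d ≤ max d 0 := le_max_left _ _
    rw [hr]; linarith
  haveI : Nonempty (vnBall N) := ⟨⟨0, zero_mem N.toStarSubalgebra, by simp⟩⟩
  -- step 1: every element of M is within r‖x‖ of N
  have key : ∀ x : H →L[ℂ] H, x ∈ M → ∃ n, n ∈ N ∧ ‖x - n‖ ≤ r * ‖x‖ := by
    intro x hx
    rcases eq_or_ne x 0 with rfl | hx0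
    · exact ⟨0, zero_mem N.toStarSubalgebra, by simp⟩
    have hnx : (0 : ℝ) < ‖x‖ := norm_pos_iff.mpr hx0
    have hmem : (‖x‖⁻¹ : ℂ) • x ∈ vnBall M := by
      refine ⟨Subalgebra.smul_mem M.toSubalgebra hx _, ?_⟩
      rw [norm_smul]
      simp [hnx.ne']
    set m : vnBall M := ⟨(‖x‖⁻¹ : ℂ) • x, hmem⟩ with hm
    -- the inner infimum is at most d
    have hbdd : BddAbove (Set.range fun m' : vnBall M =>
        ⨅ n : vnBall N, ‖(m' : H →L[ℂ] H) - n‖) := by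
      refine ⟨1, ?_⟩
      rintro y ⟨m', rfl⟩
      refine ciInf_le_of_le ⟨0, by rintro z ⟨n', rfl⟩; positivity⟩
        ⟨0, zero_mem N.toStarSubalgebra, by simp⟩ ?_
      simpa using m'.2.2
    have hinf : (⨅ n : vnBall N, ‖(m : H →L[ℂ] H) - n‖) ≤ d := by
      refine le_trans (le_ciSup hbdd m) ?_
      exact le_max_right _ _
    have hinf' : (⨅ n : vnBall N, ‖(m : H →L[ℂ] H) - n‖) < r := lt_of_le_of_lt hinf hdr
    obtain ⟨n, hn⟩ := exists_lt_of_ciInf_lt hinf'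
    refine ⟨(‖x‖ : ℂ) • (n : H →L[ℂ] H),
      Subalgebra.smul_mem N.toSubalgebra n.2.1 _, ?_⟩
    have hfac : x - (‖x‖ : ℂ) • (n : H →L[ℂ] H)
        = (‖x‖ : ℂ) • ((m : H →L[ℂ] H) - n) := by
      rw [smul_sub, hm]
      congr 1
      rw [smul_smul]
      have : (‖x‖ : ℂ) * (‖x‖⁻¹ : ℂ) = 1 := by
        rw [← Complex.ofReal_inv, ← Complex.ofReal_mul, mul_inv_cancel₀ hnx.ne']
        simp
      rw [this, one_smul]
    rw [hfac, norm_smul]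
    have : ‖(‖x‖ : ℂ)‖ = ‖x‖ := by simp [abs_of_nonneg hnx.le]
    rw [this, mul_comm]
    exact mul_le_mul_of_nonneg_right hn.le hnx.le
  -- step 2: iterate
  have iter : ∀ x : H →L[ℂ] H, x ∈ M → ∀ k : ℕ, ∃ n, n ∈ N ∧ ‖x - n‖ ≤ r ^ k * ‖x‖ := by
    intro x hx k
    induction k with
    | zero => exact ⟨0, zero_mem N.toStarSubalgebra, by simp⟩
    | succ k ih =>
      obtain ⟨n, hnN, hn⟩ := ih
      have hyM : x - n ∈ M := sub_mem hx (hNM hnN)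
      obtain ⟨n2, hn2N, hn2⟩ := key _ hyM
      refine ⟨n + n2, add_mem hnN hn2N, ?_⟩
      have : x - (n + n2) = (x - n) - n2 := by abel
      rw [this]
      calc ‖x - n - n2‖ ≤ r * ‖x - n‖ := hn2
        _ ≤ r * (r ^ k * ‖x‖) := mul_le_mul_of_nonneg_left hn hr0
        _ = r ^ (k + 1) * ‖x‖ := by ring
  -- step 3: closure
  have hsub : (M : Set (H →L[ℂ] H)) ⊆ closure (N : Set (H →L[ℂ] H)) := by
    intro x hx
    rw [Metric.mem_closure_iff]
    intro ε hε
    have htend : Filter.Tendsto (fun k : ℕ => r ^ k * ‖x‖) Filter.atTop (nhds 0) := by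
      simpa using (tendsto_pow_atTop_nhds_zero_of_lt_one hr0 hr1).mul_const ‖x‖
    obtain ⟨k, hk⟩ := (htend.eventually (gt_mem_nhds hε)).exists
    obtain ⟨n, hnN, hn⟩ := iter x hx k
    exact ⟨n, hnN, by rw [dist_eq_norm]; exact lt_of_le_of_lt hn hk⟩
  have hclosed := vn_isClosed N
  ext x
  constructor
  · exact fun h => hNM h
  · intro h
    have := hsub h
    rwa [hclosed.closure_eq] at this
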